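/- arXiv:math/0510406 — 2 statements merged into one kernel-verified Lean document; each statement's English description precedes it below -/
import Mathlib

section
/- Φ∧Φ = 14σ·vol₈; equivalently, the standard volume form e∧e₀∧e₁∧⋯∧e₆ of ℝ⁸ equals (σ/14)·Φ∧Φ. -/
open scoped BigOperators RealInnerProductSpace

noncomputable section

abbrev Form (n p : ℕ) := (Fin p → EuclideanSpace ℝ (Fin n)) → ℝ

namespace Form

/-- Wedge product of forms (shuffle convention; full antisymmetrization divided by p!q!). -/
def wedge {n p q : ℕ} (α : Form n p) (β : Form n q) : Form n (p + q) :=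
  fun x =>
    (((p.factorial * q.factorial : ℕ) : ℝ))⁻¹ *
      ∑ σ : Equiv.Perm (Fin (p + q)),
        ((Equiv.Perm.sign σ : ℤ) : ℝ) *
          (α fun i => x (σ (Fin.castAdd q i))) * (β fun j => x (σ (Fin.natAdd p j)))

/-- Inner product of `p`-forms. -/
def inner' {n p : ℕ} (α β : Form n p) : ℝ :=
  ((p.factorial : ℕ) : ℝ)⁻¹ *
    ∑ f : Fin p → Fin n,
      (α fun k => EuclideanSpace.single (f k) 1) * (β fun k => EuclideanSpace.single (f k) 1)

/-- Interior product of a vector and a form. -/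
def iprod {n p : ℕ} (v : EuclideanSpace ℝ (Fin n)) (α : Form n (p + 1)) : Form n p :=
  fun x => α (Fin.cons v x)

end Form

infixl:72 " ⋏ " => Form.wedge

/-- The 1-form dual to a vector. -/
def dual {n : ℕ} (v : EuclideanSpace ℝ (Fin n)) : Form n 1 := fun x => ⟪v, x 0⟫

abbrev E8 := EuclideanSpace ℝ (Fin 8)

/-- The basis vector `e`. -/
def e8 : E8 := EuclideanSpace.single 7 1

/-- The basis vectors `e₀,…,e₆` indexed mod 7. -/
def u7 (i : ZMod 7) : E8 := EuclideanSpace.single ⟨i.val, i.val_lt.trans (by norm_num)⟩ 1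

/-- The basis indexed by ℤ₈, with `e₇ = e`. -/
def u8 (i : ZMod 8) : E8 := EuclideanSpace.single ⟨i.val, i.val_lt⟩ 1

/-- The Spin(7) fundamental 4-form. -/
def Phi (σ : ℝ) : Form 8 4 := fun x =>
  (∑ i : ZMod 7, (dual e8 ⋏ dual (u7 i) ⋏ dual (u7 (i + 1)) ⋏ dual (u7 (i + 3))) x)
    - σ * ∑ i : ZMod 7,
        (dual (u7 (i + 2)) ⋏ dual (u7 (i + 4)) ⋏ dual (u7 (i + 5)) ⋏ dual (u7 (i + 6))) x

/-- The standard volume form of ℝ⁸. -/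
def vol8 : Form 8 8 :=
  dual e8 ⋏ dual (u7 0) ⋏ dual (u7 1) ⋏ dual (u7 2) ⋏ dual (u7 3) ⋏ dual (u7 4) ⋏ dual (u7 5)
    ⋏ dual (u7 6)

/-- The 2-forms spanning spin(7)ᗮ. -/
def beta (σ : ℝ) (i : ZMod 7) : Form 8 2 := fun x =>
  σ * (dual (u7 i) ⋏ dual e8) x + (dual (u7 (i + 1)) ⋏ dual (u7 (i + 3))) x
    + (dual (u7 (i + 4)) ⋏ dual (u7 (i + 5))) x + (dual (u7 (i + 2)) ⋏ dual (u7 (i + 6))) x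

-- auxiliary: determinant form
def D {n p : ℕ} (v : Fin p → EuclideanSpace ℝ (Fin n)) : Form n p := fun x =>
  ∑ σ : Equiv.Perm (Fin p), ((Equiv.Perm.sign σ : ℤ) : ℝ) * ∏ m, ⟪v m, x (σ m)⟫

lemma D_eq_det {n p : ℕ} (v : Fin p → EuclideanSpace ℝ (Fin n)) (x : Fin p → EuclideanSpace ℝ (Fin n)) :
    D v x = Matrix.det (Matrix.of fun l m => (⟪v m, x l⟫ : ℝ)) := by
  rw [Matrix.det_apply']; rfl

lemma D_comp_perm {n p : ℕ} (v : Fin p → EuclideanSpace ℝ (Fin n)) (π : Equiv.Perm (Fin p))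
    (x : Fin p → EuclideanSpace ℝ (Fin n)) :
    D (v ∘ π) x = ((Equiv.Perm.sign π : ℤ) : ℝ) * D v x := by
  rw [D_eq_det, D_eq_det]
  have h : (Matrix.of fun l m => (⟪(v ∘ π) m, x l⟫ : ℝ))
      = (Matrix.of fun l m => (⟪v m, x l⟫ : ℝ)).submatrix id π := rfl
  rw [h, Matrix.det_permute']

lemma D_eq_zero {n p : ℕ} (v : Fin p → EuclideanSpace ℝ (Fin n))
    (x : Fin p → EuclideanSpace ℝ (Fin n)) {i j : Fin p} (hij : i ≠ j) (hv : v i = v j) :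
    D v x = 0 := by
  rw [D_eq_det]
  exact Matrix.det_zero_of_column_eq hij (fun k => by simp [hv])

lemma dual_eq_D {n : ℕ} (v : EuclideanSpace ℝ (Fin n)) : dual v = D ![v] := by
  funext x
  simp [dual, D]


lemma D_wedge {n p q : ℕ} (v : Fin p → EuclideanSpace ℝ (Fin n))
    (w : Fin q → EuclideanSpace ℝ (Fin n)) :
    (D v ⋏ D w) = D (Fin.append v w) := by
  funext x
  show (((p.factorial * q.factorial : ℕ) : ℝ))⁻¹ * _ = _
  rw [inv_mul_eq_iff_eq_mul₀ (by positivity)]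
  have key : ∀ (τ : Equiv.Perm (Fin p)) (ρ : Equiv.Perm (Fin q)),
      (∑ σ : Equiv.Perm (Fin (p+q)),
        ((Equiv.Perm.sign σ : ℤ) : ℝ) *
          (((Equiv.Perm.sign τ : ℤ) : ℝ) * ∏ m, ⟪v m, x (σ (Fin.castAdd q (τ m)))⟫) *
          (((Equiv.Perm.sign ρ : ℤ) : ℝ) * ∏ m, ⟪w m, x (σ (Fin.natAdd p (ρ m)))⟫))
      = D (Fin.append v w) x := by
    intro τ ρ
    set E : Equiv.Perm (Fin (p+q)) := finSumFinEquiv.permCongr (Equiv.sumCongr τ ρ) with hE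
    have hEl : ∀ m, E (Fin.castAdd q m) = Fin.castAdd q (τ m) := by
      intro m
      simp [hE, Equiv.permCongr_apply, finSumFinEquiv_symm_apply_castAdd]
    have hEr : ∀ m, E (Fin.natAdd p m) = Fin.natAdd p (ρ m) := by
      intro m
      simp [hE, Equiv.permCongr_apply, finSumFinEquiv_symm_apply_natAdd]
    have hsE : Equiv.Perm.sign E = Equiv.Perm.sign τ * Equiv.Perm.sign ρ := by
      simp [hE, Equiv.Perm.sign_permCongr, Equiv.Perm.sign_sumCongr]
    simp only [D]
    apply Fintype.sum_equiv (Equiv.mulRight E)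
    intro σ
    simp only [Equiv.coe_mulRight]
    rw [Fin.prod_univ_add]
    simp only [Fin.append_left, Fin.append_right, Equiv.Perm.mul_apply, hEl, hEr]
    rw [map_mul Equiv.Perm.sign σ E, hsE]
    simp only [Units.val_mul, Int.cast_mul]
    ring
  have step1 : ∀ σ : Equiv.Perm (Fin (p+q)),
      ((Equiv.Perm.sign σ : ℤ) : ℝ) * (D v fun i => x (σ (Fin.castAdd q i)))
          * (D w fun j => x (σ (Fin.natAdd p j)))
      = ∑ τ : Equiv.Perm (Fin p), ∑ ρ : Equiv.Perm (Fin q),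
          ((Equiv.Perm.sign σ : ℤ) : ℝ) *
            (((Equiv.Perm.sign τ : ℤ) : ℝ) * ∏ m, ⟪v m, x (σ (Fin.castAdd q (τ m)))⟫) *
            (((Equiv.Perm.sign ρ : ℤ) : ℝ) * ∏ m, ⟪w m, x (σ (Fin.natAdd p (ρ m)))⟫) := by
    intro σ
    simp only [D]
    rw [mul_assoc, Finset.sum_mul_sum, Finset.mul_sum]
    exact Finset.sum_congr rfl fun τ _ =>
      by rw [Finset.mul_sum]; exact Finset.sum_congr rfl fun ρ _ => by ring
  rw [Finset.sum_congr rfl fun σ _ => step1 σ, Finset.sum_comm]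
  rw [Finset.sum_congr rfl fun τ _ => Finset.sum_comm]
  rw [Finset.sum_congr rfl fun τ _ => Finset.sum_congr rfl fun ρ _ => key τ ρ]
  simp only [Finset.sum_const, Finset.card_univ, Fintype.card_perm, Fintype.card_fin, smul_smul, nsmul_eq_mul]
  push_cast
  ring

lemma w4 {n : ℕ} (a b c d : EuclideanSpace ℝ (Fin n)) :
    dual a ⋏ dual b ⋏ dual c ⋏ dual d = D ![a, b, c, d] := by
  rw [dual_eq_D a, dual_eq_D b, dual_eq_D c, dual_eq_D d, D_wedge, D_wedge, D_wedge]
  exact congrArg D (funext fun k => by fin_cases k <;> rfl)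

lemma D_wedge_dual {n p : ℕ} (v : Fin p → EuclideanSpace ℝ (Fin n))
    (a : EuclideanSpace ℝ (Fin n)) :
    D v ⋏ dual a = D (Fin.append v ![a]) := by
  rw [dual_eq_D, D_wedge]

lemma wedge_sum_left {n p q : ℕ} {ι : Type*} [Fintype ι] (f : ι → Form n p) (β : Form n q)
    (x : Fin (p + q) → EuclideanSpace ℝ (Fin n)) :
    ((fun y => ∑ i, f i y) ⋏ β) x = ∑ i, (f i ⋏ β) x := by
  simp only [Form.wedge]
  rw [← Finset.mul_sum]
  congr 1
  rw [Finset.sum_comm]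
  exact Finset.sum_congr rfl fun σ _ => by
    rw [Finset.mul_sum, Finset.sum_mul]

lemma wedge_sum_right {n p q : ℕ} {ι : Type*} [Fintype ι] (α : Form n p) (g : ι → Form n q)
    (x : Fin (p + q) → EuclideanSpace ℝ (Fin n)) :
    (α ⋏ (fun y => ∑ i, g i y)) x = ∑ i, (α ⋏ g i) x := by
  simp only [Form.wedge]
  rw [← Finset.mul_sum]
  congr 1
  rw [Finset.sum_comm]
  exact Finset.sum_congr rfl fun σ _ => by
    rw [Finset.mul_sum]

lemma wedge_sub_smul_left {n p q : ℕ} (α₁ α₂ : Form n p) (s : ℝ) (β : Form n q)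
    (x : Fin (p + q) → EuclideanSpace ℝ (Fin n)) :
    ((fun y => α₁ y - s * α₂ y) ⋏ β) x = (α₁ ⋏ β) x - s * (α₂ ⋏ β) x := by
  simp only [Form.wedge]
  rw [Finset.sum_congr rfl fun σ _ =>
    (by ring :
      ((Equiv.Perm.sign σ : ℤ) : ℝ) *
          (α₁ (fun i => x (σ (Fin.castAdd q i))) - s * α₂ (fun i => x (σ (Fin.castAdd q i)))) *
          β (fun j => x (σ (Fin.natAdd p j)))
        = ((Equiv.Perm.sign σ : ℤ) : ℝ) * α₁ (fun i => x (σ (Fin.castAdd q i))) *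
            β (fun j => x (σ (Fin.natAdd p j)))
          - s * (((Equiv.Perm.sign σ : ℤ) : ℝ) * α₂ (fun i => x (σ (Fin.castAdd q i))) *
              β (fun j => x (σ (Fin.natAdd p j)))))]
  rw [Finset.sum_sub_distrib, ← Finset.mul_sum]
  ring

lemma wedge_sub_smul_right {n p q : ℕ} (α : Form n p) (β₁ β₂ : Form n q) (s : ℝ)
    (x : Fin (p + q) → EuclideanSpace ℝ (Fin n)) :
    (α ⋏ (fun y => β₁ y - s * β₂ y)) x = (α ⋏ β₁) x - s * (α ⋏ β₂) x := by
  simp only [Form.wedge]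
  rw [Finset.sum_congr rfl fun σ _ =>
    (by ring :
      ((Equiv.Perm.sign σ : ℤ) : ℝ) * α (fun i => x (σ (Fin.castAdd q i))) *
          (β₁ (fun j => x (σ (Fin.natAdd p j))) - s * β₂ (fun j => x (σ (Fin.natAdd p j))))
        = ((Equiv.Perm.sign σ : ℤ) : ℝ) * α (fun i => x (σ (Fin.castAdd q i))) *
            β₁ (fun j => x (σ (Fin.natAdd p j)))
          - s * (((Equiv.Perm.sign σ : ℤ) : ℝ) * α (fun i => x (σ (Fin.castAdd q i))) *
              β₂ (fun j => x (σ (Fin.natAdd p j)))))]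
  rw [Finset.sum_sub_distrib, ← Finset.mul_sum]
  ring


def TA (i : ZMod 7) : Fin 4 → E8 := ![e8, u7 i, u7 (i + 1), u7 (i + 3)]
def TB (i : ZMod 7) : Fin 4 → E8 := ![u7 (i + 2), u7 (i + 4), u7 (i + 5), u7 (i + 6)]
def WW (i : ZMod 7) : Fin 8 → E8 :=
  ![e8, u7 i, u7 (i + 1), u7 (i + 2), u7 (i + 3), u7 (i + 4), u7 (i + 5), u7 (i + 6)]

def rot8 : Equiv.Perm (Fin 8) :=
  Equiv.swap 1 2 * Equiv.swap 2 3 * Equiv.swap 3 4 * Equiv.swap 4 5 * Equiv.swap 5 6 *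
    Equiv.swap 6 7

def blk8 : Equiv.Perm (Fin 8) :=
  Equiv.swap 0 4 * Equiv.swap 1 5 * Equiv.swap 2 6 * Equiv.swap 3 7

lemma sign_rot8 : Equiv.Perm.sign rot8 = 1 := by decide
lemma sign_blk8 : Equiv.Perm.sign blk8 = 1 := by decide

lemma hPhi (s : ℝ) : Phi s = fun y => (∑ i : ZMod 7, D (TA i) y) - s * ∑ i : ZMod 7, D (TB i) y := by
  funext y
  simp only [Phi, w4]
  rfl

lemma hvol : vol8 = D (WW 0) := by
  show (((dual e8 ⋏ dual (u7 0) ⋏ dual (u7 1) ⋏ dual (u7 2)) ⋏ dual (u7 3)) ⋏ dual (u7 4))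
      ⋏ dual (u7 5) ⋏ dual (u7 6) = D (WW 0)
  rw [w4, D_wedge_dual, D_wedge_dual, D_wedge_dual, D_wedge_dual]
  exact congrArg D (funext fun k => by fin_cases k <;> rfl)

lemma hAA (i j : ZMod 7) (x : Fin 8 → E8) : (D (TA i) ⋏ D (TA j)) x = 0 := by
  rw [D_wedge]
  exact D_eq_zero _ x (show (0 : Fin 8) ≠ 4 by decide)
    (show Fin.append (TA i) (TA j) 0 = Fin.append (TA i) (TA j) 4 from rfl)

lemma hBB (i j : ZMod 7) (x : Fin 8 → E8) : (D (TB i) ⋏ D (TB j)) x = 0 := by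
  rw [D_wedge]
  have htup : ∀ k : Fin 8, Fin.append (TB i) (TB j) k
      = u7 ((![i + 2, i + 4, i + 5, i + 6, j + 2, j + 4, j + 5, j + 6] : Fin 8 → ZMod 7) k) := by
    intro k; fin_cases k <;> rfl
  obtain ⟨k, l, hkl, hv⟩ := Fintype.exists_ne_map_eq_of_card_lt
    (![i + 2, i + 4, i + 5, i + 6, j + 2, j + 4, j + 5, j + 6] : Fin 8 → ZMod 7) (by simp)
  exact D_eq_zero _ x hkl (by rw [htup k, htup l, hv])

lemma collision7 : ∀ d : ZMod 7, d ≠ 0 → ∃ k l : Fin 7, k ≠ l ∧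
    (![0, 1, 3, d + 2, d + 4, d + 5, d + 6] : Fin 7 → ZMod 7) k
      = (![0, 1, 3, d + 2, d + 4, d + 5, d + 6] : Fin 7 → ZMod 7) l := by decide

lemma htupAB (i d : ZMod 7) : ∀ k : Fin 7, Fin.append (TA i) (TB (i + d)) k.succ
    = u7 (i + (![0, 1, 3, d + 2, d + 4, d + 5, d + 6] : Fin 7 → ZMod 7) k) := by
  intro k
  fin_cases k
  · exact congrArg u7 (show i = i + 0 by ring)
  · exact congrArg u7 (show i + 1 = i + 1 by ring)
  · exact congrArg u7 (show i + 3 = i + 3 by ring)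
  · exact congrArg u7 (show i + d + 2 = i + (d + 2) by ring)
  · exact congrArg u7 (show i + d + 4 = i + (d + 4) by ring)
  · exact congrArg u7 (show i + d + 5 = i + (d + 5) by ring)
  · exact congrArg u7 (show i + d + 6 = i + (d + 6) by ring)

lemma hTswap (i : ZMod 7) : Fin.append (TA i) (TB i) = WW i ∘ Equiv.swap (3 : Fin 8) 4 := by
  funext k; fin_cases k <;> rfl

lemma hWrot (i : ZMod 7) : WW (i + 1) = WW i ∘ rot8 := by
  funext k
  fin_cases k
  · rfl
  · exact congrArg u7 (by ring)
  · exact congrArg u7 (by ring)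
  · exact congrArg u7 (by ring)
  · exact congrArg u7 (by ring)
  · exact congrArg u7 (by ring)
  · exact congrArg u7 (by ring)
  · exact congrArg u7 (by rw [add_assoc, show (1 : ZMod 7) + 6 = 0 by decide, add_zero])

lemma hWconst (x : Fin 8 → E8) : ∀ i : ZMod 7, D (WW i) x = D (WW 0) x := by
  have key : ∀ m : ℕ, D (WW (m : ZMod 7)) x = D (WW 0) x := by
    intro m
    induction m with
    | zero => norm_num
    | succ m ih =>
      have h1 : ((m + 1 : ℕ) : ZMod 7) = (m : ZMod 7) + 1 := by push_cast; ring
      rw [h1, hWrot, D_comp_perm, sign_rot8, ih]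
      norm_num
  intro i
  have h := key i.val
  rwa [show ((i.val : ℕ) : ZMod 7) = i by simp [ZMod.natCast_val, ZMod.cast_id]] at h

lemma hABmain (i : ZMod 7) (x : Fin 8 → E8) : (D (TA i) ⋏ D (TB i)) x = - vol8 x := by
  rw [D_wedge, hTswap i, D_comp_perm,
    Equiv.Perm.sign_swap (show (3 : Fin 8) ≠ 4 by decide), hWconst x i, ← hvol]
  norm_num

lemma hABsum (i : ZMod 7) (x : Fin 8 → E8) :
    ∑ j : ZMod 7, (D (TA i) ⋏ D (TB j)) x = - vol8 x := by
  have reindex : ∑ d : ZMod 7, (D (TA i) ⋏ D (TB (i + d))) x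
      = ∑ j : ZMod 7, (D (TA i) ⋏ D (TB j)) x :=
    Fintype.sum_equiv (Equiv.addLeft i) _ _ (fun d => rfl)
  rw [← reindex, Finset.sum_eq_single 0]
  · rw [add_zero]
    exact hABmain i x
  · intro d _ hd
    rw [D_wedge]
    obtain ⟨k, l, hkl, hw⟩ := collision7 d hd
    exact D_eq_zero _ x (i := k.succ) (j := l.succ)
      (fun h => hkl (Fin.succ_inj.mp h))
      (by rw [htupAB i d k, htupAB i d l, hw])
  · intro h
    exact absurd (Finset.mem_univ 0) h

lemma hBAcomm (i j : ZMod 7) (x : Fin 8 → E8) :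
    (D (TB i) ⋏ D (TA j)) x = (D (TA j) ⋏ D (TB i)) x := by
  rw [D_wedge, D_wedge,
    show Fin.append (TB i) (TA j) = Fin.append (TA j) (TB i) ∘ blk8 from
      funext fun k => by fin_cases k <;> rfl,
    D_comp_perm, sign_blk8]
  norm_num


/-- Φ∧Φ = 14σ·vol₈; equivalently, the standard volume form
`e∧e₀∧⋯∧e₆` of ℝ⁸ equals `(σ/14)·Φ∧Φ`. -/
theorem stmt0 (σ : ℝ) (hσ : σ = 1 ∨ σ = -1) (x : Fin 8 → E8) :
    (Phi σ ⋏ Phi σ) x = 14 * σ * vol8 x ∧ vol8 x = σ / 14 * (Phi σ ⋏ Phi σ) x := by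
  have main : (Phi σ ⋏ Phi σ) x = 14 * σ * vol8 x := by
    rw [hPhi σ]
    simp only [wedge_sub_smul_left, wedge_sub_smul_right, wedge_sum_left, wedge_sum_right,
      hAA, hBB, hBAcomm, Finset.sum_const_zero, hABsum, mul_zero, sub_zero, zero_sub]
    rw [Finset.sum_comm]
    simp only [hABsum, Finset.sum_const, Finset.card_univ, ZMod.card, nsmul_eq_mul]
    push_cast
    ring
  refine ⟨main, ?_⟩
  rw [main]
  rcases hσ with h | h <;> rw [h] <;> ring
end
end

section
/- Every 2-form ψ on ℝ⁸ can be written uniquely as ψ = ψ₀ + Σ_{i∈ℤ₇} c_i β_i, where ψ₀ satisfies σψ₀(e_i, e) + ψ₀(e_{i+1}, e_{i+3}) + ψ₀(e_{i+4}, e_{i+5}) + ψ₀(e_{i+2}, e_{i+6}) = 0 for all i ∈ ℤ₇ and c_i ∈ ℝ; moreover necessarily c_i = ⟨ψ, β_i⟩/4. (Orthogonal decomposition Λ²(ℝ⁸)* = spin(7) ⊕ spin(7)⊥.) -/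
open scoped BigOperators RealInnerProductSpace

noncomputable section

infixl:72 " ⋏ " => Form.wedge

/-- The wedge of the 1-forms dual to `u` and `v`, as an alternating 2-form. -/
def wedge1A (u v : E8) : AlternatingMap ℝ E8 ℝ (Fin 2) :=
  MultilinearMap.alternatization
    ((MultilinearMap.mkPiAlgebra ℝ (Fin 2) ℝ).compLinearMap
      ![(innerSL ℝ u).toLinearMap, (innerSL ℝ v).toLinearMap])

/-- The 2-forms `β_i` spanning spin(7)ᗮ, as alternating 2-forms. -/
def betaA (σ : ℝ) (i : ZMod 7) : AlternatingMap ℝ E8 ℝ (Fin 2) :=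
  σ • wedge1A (u7 i) e8 + wedge1A (u7 (i + 1)) (u7 (i + 3))
    + wedge1A (u7 (i + 4)) (u7 (i + 5)) + wedge1A (u7 (i + 2)) (u7 (i + 6))

namespace Spin7Aux
lemma perm_fin2 : (Finset.univ : Finset (Equiv.Perm (Fin 2))) = {1, Equiv.swap 0 1} := by decide

lemma wedge1A_apply (u v : E8) (x : Fin 2 → E8) :
    wedge1A u v x = ⟪u, x 0⟫ * ⟪v, x 1⟫ - ⟪u, x 1⟫ * ⟪v, x 0⟫ := by
  rw [wedge1A, MultilinearMap.alternatization_apply, perm_fin2,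
    Finset.sum_insert (by decide), Finset.sum_singleton]
  simp [Equiv.swap_apply_def]
  ring

lemma inner_single_single (a b : Fin 8) :
    ⟪(EuclideanSpace.single a 1 : E8), (EuclideanSpace.single b 1 : E8)⟫ =
      if a = b then (1:ℝ) else 0 := by
  rw [EuclideanSpace.inner_single_left]
  simp [EuclideanSpace.single_apply, eq_comm]

def ix (i : ZMod 7) : Fin 8 := ⟨i.val, i.val_lt.trans (by norm_num)⟩
lemma u7_eq (i : ZMod 7) : u7 i = EuclideanSpace.single (ix i) 1 := rfl
lemma e8_eq : e8 = EuclideanSpace.single 7 1 := rfl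
lemma ix_ne_7 (i : ZMod 7) : ix i ≠ 7 :=
  fun h => absurd (congrArg Fin.val h) (Nat.ne_of_lt i.val_lt)
lemma ix_eq_iff (i j : ZMod 7) : ix i = ix j ↔ i = j := by
  constructor
  · intro h; exact ZMod.val_injective 7 (congrArg (Fin.val (n := 8)) h)
  · intro h; rw [h]

lemma inner_u7_u7 (i j : ZMod 7) : ⟪u7 i, u7 j⟫ = if i = j then (1:ℝ) else 0 := by
  rw [u7_eq, u7_eq, inner_single_single]
  simp only [ix_eq_iff]
lemma inner_u7_e8 (i : ZMod 7) : ⟪u7 i, e8⟫ = (0:ℝ) := by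
  rw [u7_eq, e8_eq, inner_single_single, if_neg (ix_ne_7 i)]
lemma inner_e8_u7 (i : ZMod 7) : ⟪e8, u7 i⟫ = (0:ℝ) := by
  rw [u7_eq, e8_eq, inner_single_single, if_neg (fun h => ix_ne_7 i h.symm)]
lemma inner_e8_e8 : ⟪e8, e8⟫ = (1:ℝ) := by
  rw [e8_eq, inner_single_single, if_pos rfl]

lemma w_uu_uu (a b i j : ZMod 7) : wedge1A (u7 a) (u7 b) ![u7 i, u7 j]
    = (if a = i then (1:ℝ) else 0) * (if b = j then (1:ℝ) else 0)
      - (if a = j then (1:ℝ) else 0) * (if b = i then (1:ℝ) else 0) := by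
  rw [wedge1A_apply]
  simp only [Matrix.cons_val_zero, Matrix.cons_val_one, Matrix.head_cons,
    inner_u7_u7, inner_u7_e8, inner_e8_u7, inner_e8_e8]

lemma w_uu_ue (a b i : ZMod 7) : wedge1A (u7 a) (u7 b) ![u7 i, e8] = 0 := by
  rw [wedge1A_apply]
  simp only [Matrix.cons_val_zero, Matrix.cons_val_one, Matrix.head_cons,
    inner_u7_u7, inner_u7_e8, inner_e8_u7, inner_e8_e8]
  ring

lemma w_ue_uu (a i j : ZMod 7) : wedge1A (u7 a) e8 ![u7 i, u7 j] = 0 := by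
  rw [wedge1A_apply]
  simp only [Matrix.cons_val_zero, Matrix.cons_val_one, Matrix.head_cons,
    inner_u7_u7, inner_u7_e8, inner_e8_u7, inner_e8_e8]
  ring

lemma w_ue_ue (a i : ZMod 7) : wedge1A (u7 a) e8 ![u7 i, e8] = if a = i then (1:ℝ) else 0 := by
  rw [wedge1A_apply]
  simp only [Matrix.cons_val_zero, Matrix.cons_val_one, Matrix.head_cons,
    inner_u7_u7, inner_u7_e8, inner_e8_u7, inner_e8_e8]
  ring

def Lf (σ : ℝ) (i : ZMod 7) (ψ : AlternatingMap ℝ E8 ℝ (Fin 2)) : ℝ :=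
  σ * ψ ![u7 i, e8] + ψ ![u7 (i + 1), u7 (i + 3)] + ψ ![u7 (i + 4), u7 (i + 5)]
    + ψ ![u7 (i + 2), u7 (i + 6)]

def G (j a b : ZMod 7) : ℤ :=
  ((if j + 1 = a then 1 else 0) * (if j + 3 = b then 1 else 0)
    - (if j + 1 = b then 1 else 0) * (if j + 3 = a then 1 else 0))
  + ((if j + 4 = a then 1 else 0) * (if j + 5 = b then 1 else 0)
    - (if j + 4 = b then 1 else 0) * (if j + 5 = a then 1 else 0))
  + ((if j + 2 = a then 1 else 0) * (if j + 6 = b then 1 else 0)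
    - (if j + 2 = b then 1 else 0) * (if j + 6 = a then 1 else 0))

lemma beta_uu (σ : ℝ) (j a b : ZMod 7) : betaA σ j ![u7 a, u7 b] = (G j a b : ℝ) := by
  simp only [betaA, AlternatingMap.add_apply, AlternatingMap.smul_apply, smul_eq_mul,
    w_uu_uu, w_ue_uu, G, Int.cast_add, Int.cast_sub, Int.cast_mul,
    apply_ite (fun z : ℤ => (z : ℝ)), Int.cast_one, Int.cast_zero]
  ring

lemma beta_ue (σ : ℝ) (j i : ZMod 7) :
    betaA σ j ![u7 i, e8] = σ * (if j = i then 1 else 0) := by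
  simp only [betaA, AlternatingMap.add_apply, AlternatingMap.smul_apply, smul_eq_mul,
    w_uu_ue, w_ue_ue]
  ring

lemma Gsum : ∀ i j : ZMod 7,
    G j (i + 1) (i + 3) + G j (i + 4) (i + 5) + G j (i + 2) (i + 6)
      = if i = j then 3 else 0 := by decide

lemma Lf_beta (σ : ℝ) (i j : ZMod 7) :
    Lf σ i (betaA σ j) = if i = j then σ * σ + 3 else 0 := by
  have hg := Gsum i j
  rw [Lf, beta_ue, beta_uu, beta_uu, beta_uu]
  by_cases h : i = j
  · subst h
    rw [if_pos rfl, if_pos rfl]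
    have h3 : (G i (i + 1) (i + 3) : ℝ) + (G i (i + 4) (i + 5) : ℝ)
        + (G i (i + 2) (i + 6) : ℝ) = 3 := by
      rw [if_pos rfl] at hg
      exact_mod_cast hg
    linarith [h3]
  · rw [if_neg h, if_neg (fun hh => h hh.symm)]
    have h0 : (G j (i + 1) (i + 3) : ℝ) + (G j (i + 4) (i + 5) : ℝ)
        + (G j (i + 2) (i + 6) : ℝ) = 0 := by
      rw [if_neg h] at hg
      exact_mod_cast hg
    linarith [h0]

lemma matrix_pair (x y : Fin 8) :
    (fun k => EuclideanSpace.single ((![x, y] : Fin 2 → Fin 8) k) (1:ℝ)) =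
      ![EuclideanSpace.single x 1, EuclideanSpace.single y 1] := by
  funext k; fin_cases k <;> rfl

lemma inner'_wedge (ψ : AlternatingMap ℝ E8 ℝ (Fin 2)) (a b : Fin 8) :
    Form.inner' (⇑ψ) (⇑(wedge1A (EuclideanSpace.single a 1) (EuclideanSpace.single b 1)))
      = ψ ![EuclideanSpace.single a 1, EuclideanSpace.single b 1] := by
  rw [Form.inner']
  rw [← Equiv.sum_comp (piFinTwoEquiv (fun _ : Fin 2 => Fin 8)).symm]
  rw [Fintype.sum_prod_type]
  have key : ∀ x y : Fin 8,
      (ψ fun k => EuclideanSpace.single (((piFinTwoEquiv (fun _ : Fin 2 => Fin 8)).symm (x, y)) k) (1:ℝ)) *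
      (wedge1A (EuclideanSpace.single a 1) (EuclideanSpace.single b 1)
        fun k => EuclideanSpace.single (((piFinTwoEquiv (fun _ : Fin 2 => Fin 8)).symm (x, y)) k) (1:ℝ))
      = ψ ![EuclideanSpace.single x 1, EuclideanSpace.single y 1] *
        ((if x = a then (1:ℝ) else 0) * (if y = b then (1:ℝ) else 0)
          - (if y = a then (1:ℝ) else 0) * (if x = b then (1:ℝ) else 0)) := by
    intro x y
    have hxy : (piFinTwoEquiv (fun _ : Fin 2 => Fin 8)).symm (x, y) = ![x, y] := by
      funext k; fin_cases k <;> rfl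
    rw [hxy, matrix_pair, wedge1A_apply]
    simp [inner_single_single, eq_comm]
  simp only [key]
  have hsum : ∀ x : Fin 8, ∑ y : Fin 8,
      ψ ![EuclideanSpace.single x 1, EuclideanSpace.single y 1] *
        ((if x = a then (1:ℝ) else 0) * (if y = b then (1:ℝ) else 0)
          - (if y = a then (1:ℝ) else 0) * (if x = b then (1:ℝ) else 0))
      = (if x = a then (1:ℝ) else 0) * ψ ![EuclideanSpace.single x 1, EuclideanSpace.single b 1]
        - (if x = b then (1:ℝ) else 0) * ψ ![EuclideanSpace.single x 1, EuclideanSpace.single a 1] := by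
    intro x
    simp only [mul_sub, Finset.sum_sub_distrib, mul_ite, ite_mul, mul_zero, zero_mul,
      mul_one, one_mul]
    rw [Finset.sum_ite_eq' Finset.univ b]
    simp only [Finset.mem_univ, if_true]
    by_cases h2 : x = b <;> simp [h2, Finset.sum_ite_eq']
  simp only [hsum]
  rw [Finset.sum_sub_distrib]
  simp only [ite_mul, one_mul, zero_mul]
  rw [Finset.sum_ite_eq' Finset.univ a, Finset.sum_ite_eq' Finset.univ b]
  simp only [Finset.mem_univ, if_true]
  have hswap : ψ ![EuclideanSpace.single b 1, EuclideanSpace.single a 1]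
      = - ψ ![EuclideanSpace.single a 1, EuclideanSpace.single b 1] := by
    have := ψ.map_swap ![EuclideanSpace.single a 1, EuclideanSpace.single b 1]
      (show (0:Fin 2) ≠ 1 by decide)
    rw [← this]
    congr 1
    funext k; fin_cases k <;> simp [Equiv.swap_apply_def]
  rw [hswap]
  norm_num [Nat.factorial]
  ring

lemma sumA_apply {α : Type*} (s : Finset α) (f : α → AlternatingMap ℝ E8 ℝ (Fin 2))
    (x : Fin 2 → E8) : (∑ j ∈ s, f j) x = ∑ j ∈ s, f j x := by
  classical
  induction s using Finset.cons_induction with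
  | empty => simp
  | cons a s ha ih => rw [Finset.sum_cons, Finset.sum_cons, AlternatingMap.add_apply, ih]

lemma Lf_add (σ : ℝ) (i : ZMod 7) (ψ φ : AlternatingMap ℝ E8 ℝ (Fin 2)) :
    Lf σ i (ψ + φ) = Lf σ i ψ + Lf σ i φ := by
  simp only [Lf, AlternatingMap.add_apply]; ring

lemma Lf_sub (σ : ℝ) (i : ZMod 7) (ψ φ : AlternatingMap ℝ E8 ℝ (Fin 2)) :
    Lf σ i (ψ - φ) = Lf σ i ψ - Lf σ i φ := by
  simp only [Lf, AlternatingMap.sub_apply]; ring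

lemma Lf_sum (σ : ℝ) (i : ZMod 7) (c : ZMod 7 → ℝ) :
    Lf σ i (∑ j : ZMod 7, c j • betaA σ j) = ∑ j : ZMod 7, c j * Lf σ i (betaA σ j) := by
  simp only [Lf, sumA_apply, AlternatingMap.smul_apply, smul_eq_mul, Finset.mul_sum,
    ← Finset.sum_add_distrib]
  exact Finset.sum_congr rfl fun j _ => by ring

lemma Lf_decomp (σ : ℝ) (hσ2 : σ * σ = 1) (i : ZMod 7) (ψ₀ : AlternatingMap ℝ E8 ℝ (Fin 2))
    (c : ZMod 7 → ℝ) (h0 : Lf σ i ψ₀ = 0) :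
    Lf σ i (ψ₀ + ∑ j : ZMod 7, c j • betaA σ j) = 4 * c i := by
  rw [Lf_add, h0, Lf_sum, zero_add]
  simp only [Lf_beta, hσ2, mul_ite, mul_zero]
  rw [Finset.sum_ite_eq Finset.univ i]
  simp only [Finset.mem_univ, if_true]
  ring

lemma inner'_betaA (σ : ℝ) (ψ : AlternatingMap ℝ E8 ℝ (Fin 2)) (i : ZMod 7) :
    Form.inner' (⇑ψ : Form 8 2) (⇑(betaA σ i) : Form 8 2) = Lf σ i ψ := by
  have hcoe : (⇑(betaA σ i) : Form 8 2) = fun x => σ * wedge1A (u7 i) e8 x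
      + wedge1A (u7 (i + 1)) (u7 (i + 3)) x + wedge1A (u7 (i + 4)) (u7 (i + 5)) x
      + wedge1A (u7 (i + 2)) (u7 (i + 6)) x := by
    funext x
    simp [betaA, AlternatingMap.add_apply, AlternatingMap.smul_apply, smul_eq_mul]
  rw [hcoe, Form.inner']
  have expand : ∀ f : Fin 2 → Fin 8,
      (ψ fun k => EuclideanSpace.single (f k) (1:ℝ)) *
        ((fun x => σ * wedge1A (u7 i) e8 x
          + wedge1A (u7 (i + 1)) (u7 (i + 3)) x + wedge1A (u7 (i + 4)) (u7 (i + 5)) x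
          + wedge1A (u7 (i + 2)) (u7 (i + 6)) x) fun k => EuclideanSpace.single (f k) (1:ℝ))
      = σ * ((ψ fun k => EuclideanSpace.single (f k) (1:ℝ)) *
            (wedge1A (u7 i) e8 fun k => EuclideanSpace.single (f k) (1:ℝ)))
        + (ψ fun k => EuclideanSpace.single (f k) (1:ℝ)) *
            (wedge1A (u7 (i + 1)) (u7 (i + 3)) fun k => EuclideanSpace.single (f k) (1:ℝ))
        + (ψ fun k => EuclideanSpace.single (f k) (1:ℝ)) *
            (wedge1A (u7 (i + 4)) (u7 (i + 5)) fun k => EuclideanSpace.single (f k) (1:ℝ))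
        + (ψ fun k => EuclideanSpace.single (f k) (1:ℝ)) *
            (wedge1A (u7 (i + 2)) (u7 (i + 6)) fun k => EuclideanSpace.single (f k) (1:ℝ)) := by
    intro f; ring
  simp only [expand]
  rw [Finset.sum_add_distrib, Finset.sum_add_distrib, Finset.sum_add_distrib, ← Finset.mul_sum]
  have hw : ∀ (u v : E8), (((2:ℕ).factorial : ℝ))⁻¹ *
      ∑ f : Fin 2 → Fin 8, (ψ fun k => EuclideanSpace.single (f k) (1:ℝ)) *
        (wedge1A u v fun k => EuclideanSpace.single (f k) (1:ℝ))
      = Form.inner' (⇑ψ) (⇑(wedge1A u v)) := by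
    intro u v; rw [Form.inner']
  rw [mul_add, mul_add, mul_add, mul_left_comm, hw, hw, hw, hw]
  rw [u7_eq i, e8_eq, inner'_wedge, u7_eq (i+1), u7_eq (i+3), inner'_wedge,
    u7_eq (i+4), u7_eq (i+5), inner'_wedge, u7_eq (i+2), u7_eq (i+6), inner'_wedge]
  rw [Lf]
  rw [u7_eq i, e8_eq, u7_eq (i+1), u7_eq (i+3), u7_eq (i+4), u7_eq (i+5), u7_eq (i+2),
    u7_eq (i+6)]

end Spin7Aux

/-- every 2-form `ψ` on ℝ⁸ decomposes uniquely as `ψ = ψ₀ + Σ_i c_i β_i` with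
`ψ₀ ∈ spin(7)`; moreover necessarily `c_i = ⟨ψ,β_i⟩/4`. -/
theorem stmt6 (σ : ℝ) (hσ : σ = 1 ∨ σ = -1) (ψ : AlternatingMap ℝ E8 ℝ (Fin 2)) :
    (∃! p : AlternatingMap ℝ E8 ℝ (Fin 2) × (ZMod 7 → ℝ),
        (∀ i : ZMod 7,
          σ * p.1 ![u7 i, e8] + p.1 ![u7 (i + 1), u7 (i + 3)] + p.1 ![u7 (i + 4), u7 (i + 5)]
            + p.1 ![u7 (i + 2), u7 (i + 6)] = 0) ∧
        ψ = p.1 + ∑ i : ZMod 7, p.2 i • betaA σ i) ∧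
    (∀ (ψ₀ : AlternatingMap ℝ E8 ℝ (Fin 2)) (c : ZMod 7 → ℝ),
        (∀ i : ZMod 7,
          σ * ψ₀ ![u7 i, e8] + ψ₀ ![u7 (i + 1), u7 (i + 3)] + ψ₀ ![u7 (i + 4), u7 (i + 5)]
            + ψ₀ ![u7 (i + 2), u7 (i + 6)] = 0) →
        ψ = ψ₀ + ∑ i : ZMod 7, c i • betaA σ i →
        ∀ i : ZMod 7, c i = Form.inner' (⇑ψ : Form 8 2) (⇑(betaA σ i) : Form 8 2) / 4) := by
  have hσ2 : σ * σ = 1 := by rcases hσ with h | h <;> rw [h] <;> norm_num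
  constructor
  · refine ⟨⟨ψ - ∑ j : ZMod 7, (Spin7Aux.Lf σ j ψ / 4) • betaA σ j,
      fun j => Spin7Aux.Lf σ j ψ / 4⟩, ⟨?_, ?_⟩, ?_⟩
    · intro i
      show Spin7Aux.Lf σ i (ψ - ∑ j : ZMod 7, (Spin7Aux.Lf σ j ψ / 4) • betaA σ j) = 0
      rw [Spin7Aux.Lf_sub, Spin7Aux.Lf_sum]
      simp only [Spin7Aux.Lf_beta, hσ2, mul_ite, mul_zero]
      rw [Finset.sum_ite_eq Finset.univ i]
      simp only [Finset.mem_univ, if_true]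
      ring
    · show ψ = (ψ - ∑ j : ZMod 7, (Spin7Aux.Lf σ j ψ / 4) • betaA σ j) + _
      rw [sub_add_cancel]
    · rintro ⟨φ, c⟩ ⟨h1, h2⟩
      have hc : ∀ i, c i = Spin7Aux.Lf σ i ψ / 4 := by
        intro i
        have hd := Spin7Aux.Lf_decomp σ hσ2 i φ c (h1 i)
        rw [← h2] at hd
        rw [hd]; ring
      have hceq : c = fun j => Spin7Aux.Lf σ j ψ / 4 := funext hc
      have hsum : (∑ i : ZMod 7, c i • betaA σ i)
          = ∑ j : ZMod 7, (Spin7Aux.Lf σ j ψ / 4) • betaA σ j :=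
        Finset.sum_congr rfl fun j _ => by rw [hc j]
      have hφ : φ = ψ - ∑ j : ZMod 7, (Spin7Aux.Lf σ j ψ / 4) • betaA σ j := by
        rw [eq_sub_iff_add_eq, ← hsum]
        exact h2.symm
      exact Prod.ext hφ hceq
  · intro ψ₀ c h1 h2 i
    rw [Spin7Aux.inner'_betaA]
    have hd := Spin7Aux.Lf_decomp σ hσ2 i ψ₀ c (h1 i)
    rw [← h2] at hd
    rw [hd]; ring
end
end
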